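/- Let P ⊂ ℝ^k be a polytope, i.e. the convex hull of a finite set of points, and for n ∈ ℕ let f_P(n) = #(nP ∩ ℤ^k) be the number of integer lattice points in the dilation nP = {nx : x ∈ P}. If P is a lattice polytope (the convex hull of finitely many points of ℤ^k), then there is a polynomial p(x) with rational coefficients such that f_P(n) = p(n) for every n ∈ ℕ. If P is a rational polytope (the convex hull of finitely many points of ℚ^k), then there is a quasipolynomial p such that f_P(n) = p(n) for every n ∈ ℕ. -/

import Mathlib

open Pointwise

namespace EhrhartAux



variable {m : ℕ}

def LexLt (a b : Fin m → ℝ) : Prop := ∃ j, a j < b j ∧ ∀ i < j, a i = b i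

lemma lexLt_asymm {a b : Fin m → ℝ} (h1 : LexLt a b) (h2 : LexLt b a) : False := by
  obtain ⟨j, hj, hj2⟩ := h1
  obtain ⟨j', hj', hj2'⟩ := h2
  rcases lt_trichotomy j j' with h | h | h
  · rw [hj2' j h] at hj; exact lt_irrefl _ hj
  · subst h; exact lt_irrefl _ (hj.trans hj')
  · rw [hj2 j' h] at hj'; exact lt_irrefl _ hj'

lemma lexLt_of_ne {a b : Fin m → ℝ} (h : a ≠ b) : LexLt a b ∨ LexLt b a := by
  have hne : (Finset.univ.filter fun i => a i ≠ b i).Nonempty := by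
    by_contra hc
    apply h
    funext i
    by_contra hi
    exact hc ⟨i, Finset.mem_filter.2 ⟨Finset.mem_univ _, hi⟩⟩
  set j := (Finset.univ.filter fun i => a i ≠ b i).min' hne with hjdef
  have hj : a j ≠ b j := (Finset.mem_filter.1 ((Finset.univ.filter fun i => a i ≠ b i).min'_mem hne)).2
  have hlt : ∀ i < j, a i = b i := by
    intro i hi
    by_contra hci
    exact absurd (Finset.min'_le _ i (Finset.mem_filter.2 ⟨Finset.mem_univ _, hci⟩)) (not_le.2 hi)
  rcases lt_or_gt_of_ne hj with h' | h'
  · exact Or.inl ⟨j, h', hlt⟩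
  · exact Or.inr ⟨j, h', fun i hi => (hlt i hi).symm⟩

/-- Iterated coordinate minimization. -/
private noncomputable def lexChain (K : Set (Fin m → ℝ)) : ℕ → Set (Fin m → ℝ)
  | 0 => K
  | j + 1 =>
    if h : j < m then
      {l ∈ lexChain K j | l ⟨j, h⟩ = sInf ((fun l : Fin m → ℝ => l ⟨j, h⟩) '' lexChain K j)}
    else lexChain K j

lemma lexChain_succ_subset (K : Set (Fin m → ℝ)) (j : ℕ) :
    lexChain K (j + 1) ⊆ lexChain K j := by
  rw [lexChain]
  split
  · exact Set.sep_subset _ _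
  · exact subset_rfl

lemma lexChain_subset (K : Set (Fin m → ℝ)) {j j' : ℕ} (h : j ≤ j') :
    lexChain K j' ⊆ lexChain K j := by
  induction j' with
  | zero => simp_all
  | succ n ih =>
    rcases Nat.lt_or_ge j (n+1) with h' | h'
    · exact (lexChain_succ_subset K n).trans (ih (Nat.lt_succ_iff.1 h'))
    · have : j = n + 1 := le_antisymm h h'
      subst this; exact subset_rfl

lemma lexChain_prop (K : Set (Fin m → ℝ)) (hc : IsCompact K) (hne : K.Nonempty) (j : ℕ) :
    IsCompact (lexChain K j) ∧ (lexChain K j).Nonempty ∧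
      ∀ a ∈ lexChain K j, ∀ b ∈ lexChain K j, ∀ i : Fin m, (i : ℕ) < j → a i = b i := by
  induction j with
  | zero => exact ⟨hc, hne, fun a _ b _ i hi => absurd hi (Nat.not_lt_zero _)⟩
  | succ n ih =>
    obtain ⟨ihc, ihne, ihagree⟩ := ih
    rw [lexChain]
    split
    · rename_i h
      have hcont : Continuous (fun l : Fin m → ℝ => l ⟨n, h⟩) := continuous_apply _
      have himg : IsCompact ((fun l : Fin m → ℝ => l ⟨n, h⟩) '' lexChain K n) :=
        ihc.image hcont
      have hmem : sInf ((fun l : Fin m → ℝ => l ⟨n, h⟩) '' lexChain K n) ∈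
          (fun l : Fin m → ℝ => l ⟨n, h⟩) '' lexChain K n :=
        himg.sInf_mem (ihne.image _)
      obtain ⟨w, hw, hweq⟩ := hmem
      have hclosed : IsClosed {l : Fin m → ℝ |
          l ⟨n, h⟩ = sInf ((fun l : Fin m → ℝ => l ⟨n, h⟩) '' lexChain K n)} :=
        isClosed_eq hcont continuous_const
      refine ⟨ihc.inter_right hclosed, ⟨w, hw, hweq⟩, ?_⟩
      rintro a ⟨ha, ha2⟩ b ⟨hb, hb2⟩ i hi
      rcases Nat.lt_or_ge (i : ℕ) n with h' | h'
      · exact ihagree a ha b hb i h'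
      · have : (i : ℕ) = n := le_antisymm (Nat.lt_succ_iff.1 hi) h'
        have hieq : i = ⟨n, h⟩ := Fin.ext this
        rw [hieq, ha2, hb2]
    · rename_i h
      refine ⟨ihc, ihne, fun a ha b hb i hi => ihagree a ha b hb i ?_⟩
      exact lt_of_lt_of_le i.isLt (le_of_not_gt h)

lemma exists_lexmin {K : Set (Fin m → ℝ)} (hc : IsCompact K) (hne : K.Nonempty) :
    ∃ a ∈ K, ∀ b ∈ K, a = b ∨ LexLt a b := by
  obtain ⟨hcm, hnem, hagreem⟩ := lexChain_prop K hc hne m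
  obtain ⟨a, ha⟩ := hnem
  refine ⟨a, lexChain_subset K (Nat.zero_le m) ha, ?_⟩
  intro b hb
  by_cases hbm : b ∈ lexChain K m
  · left
    funext i
    exact hagreem a ha b hbm i i.isLt
  · right
    classical
    have hex : ∃ j, b ∉ lexChain K (j + 1) := by
      cases m with
      | zero => exact absurd hb hbm
      | succ n => exact ⟨n, hbm⟩
    set j₀ := Nat.find hex with hj₀def
    have hbj₀ : b ∈ lexChain K j₀ := by
      cases hj : j₀ with
      | zero => exact hb
      | succ n =>
        have : ¬ b ∉ lexChain K (n + 1) := Nat.find_min hex (by omega)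
        exact not_not.1 this
    have hbnot : b ∉ lexChain K (j₀ + 1) := Nat.find_spec hex
    have hj₀m : j₀ < m := by
      by_contra hge
      rw [not_lt] at hge
      apply hbnot
      rw [lexChain]
      split
      · omega
      · exact hbj₀
    set i : Fin m := ⟨j₀, hj₀m⟩ with hidef
    obtain ⟨hcj, hnej, hagreej⟩ := lexChain_prop K hc hne j₀
    have himg : IsCompact ((fun l : Fin m → ℝ => l i) '' lexChain K j₀) :=
      hcj.image (continuous_apply _)
    have hbdd : BddBelow ((fun l : Fin m → ℝ => l i) '' lexChain K j₀) := himg.bddBelow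
    have hble : sInf ((fun l : Fin m → ℝ => l i) '' lexChain K j₀) ≤ b i :=
      csInf_le hbdd ⟨b, hbj₀, rfl⟩
    have hbne : b i ≠ sInf ((fun l : Fin m → ℝ => l i) '' lexChain K j₀) := by
      intro heq
      apply hbnot
      rw [lexChain]
      split
      · exact ⟨hbj₀, heq⟩
      · omega
    have hain : a ∈ lexChain K (j₀ + 1) := lexChain_subset K (by omega) ha
    have haeq : a i = sInf ((fun l : Fin m → ℝ => l i) '' lexChain K j₀) := by
      rw [lexChain] at hain
      rw [dif_pos hj₀m] at hain
      exact hain.2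
    refine ⟨i, ?_, ?_⟩
    · rw [haeq]; exact lt_of_le_of_ne hble (Ne.symm hbne)
    · intro i' hi'
      exact hagreej a (lexChain_subset K (le_of_lt hj₀m) ha) b hbj₀ i' hi'

-- development of module B, to be appended after module A

variable {k m : ℕ}

def feas (v : Fin m → Fin k → ℝ) (x : Fin k → ℝ) (n : ℝ) : Set (Fin m → ℝ) :=
  {l | (∀ i, 0 ≤ l i) ∧ ∑ i, l i • v i = x ∧ ∑ i, l i = n}

lemma feas_isCompact (v : Fin m → Fin k → ℝ) (x : Fin k → ℝ) (n : ℝ) :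
    IsCompact (feas v x n) := by
  have hsub : feas v x n ⊆ Set.pi Set.univ (fun _ : Fin m => Set.Icc (0:ℝ) n) := by
    rintro l ⟨h0, _, hsum⟩ i _
    refine ⟨h0 i, ?_⟩
    rw [← hsum]
    exact Finset.single_le_sum (fun j _ => h0 j) (Finset.mem_univ i)
  have hcpt : IsCompact (Set.pi Set.univ (fun _ : Fin m => Set.Icc (0:ℝ) n)) :=
    isCompact_univ_pi (fun _ => isCompact_Icc)
  refine hcpt.of_isClosed_subset ?_ hsub
  have h1 : IsClosed {l : Fin m → ℝ | ∀ i, 0 ≤ l i} := by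
    have : {l : Fin m → ℝ | ∀ i, 0 ≤ l i} = ⋂ i, {l : Fin m → ℝ | 0 ≤ l i} := by
      ext l; simp
    rw [this]
    exact isClosed_iInter fun i => isClosed_le continuous_const (continuous_apply i)
  have h2 : IsClosed {l : Fin m → ℝ | ∑ i, l i • v i = x} := by
    refine isClosed_eq ?_ continuous_const
    exact continuous_finset_sum _ fun i _ => (continuous_apply i).smul continuous_const
  have h3 : IsClosed {l : Fin m → ℝ | ∑ i, l i = n} := by
    refine isClosed_eq ?_ continuous_const
    exact continuous_finset_sum _ fun i _ => continuous_apply i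
  have : feas v x n = {l : Fin m → ℝ | ∀ i, 0 ≤ l i} ∩
      ({l : Fin m → ℝ | ∑ i, l i • v i = x} ∩ {l : Fin m → ℝ | ∑ i, l i = n}) := by
    ext l; exact ⟨fun ⟨a, b, c⟩ => ⟨a, b, c⟩, fun ⟨a, b, c⟩ => ⟨a, b, c⟩⟩
  rw [this]
  exact h1.inter (h2.inter h3)

def Good (v : Fin m → Fin k → ℝ) (S : Finset (Fin m)) : Prop :=
  ∀ μ : Fin m → ℝ, ∑ i, μ i • v i = 0 → ∑ i, μ i = 0 → (∀ i ∉ S, 0 ≤ μ i) → ¬ LexLt μ 0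

lemma good_indep {v : Fin m → Fin k → ℝ} {S : Finset (Fin m)} (hS : Good v S)
    (μ : Fin m → ℝ) (h1 : ∑ i, μ i • v i = 0) (h2 : ∑ i, μ i = 0)
    (hsupp : ∀ i ∉ S, μ i = 0) : μ = 0 := by
  by_contra hne
  rcases lexLt_of_ne hne with h | h
  · exact hS μ h1 h2 (fun i hi => le_of_eq (hsupp i hi).symm) h
  · refine hS (-μ) (by simp [h1]) (by simp [h2])
      (fun i hi => by simp [hsupp i hi]) ?_
    obtain ⟨j, hj, hj2⟩ := h
    refine ⟨j, by simpa using hj, fun i hi => by simpa using (hj2 i hi).symm⟩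

lemma lexmin_good {v : Fin m → Fin k → ℝ} {x : Fin k → ℝ} {n : ℝ} {l : Fin m → ℝ}
    (hl : l ∈ feas v x n) (hmin : ∀ l' ∈ feas v x n, l = l' ∨ LexLt l l') :
    Good v (Finset.univ.filter fun i => l i ≠ 0) := by
  classical
  intro μ h1 h2 h3 hlex
  simp only [Finset.mem_filter, Finset.mem_univ, true_and, not_not] at h3
  set T := Finset.univ.filter (fun i => l i ≠ 0 ∧ μ i < 0) with hT
  set ε : ℝ := if hT : T.Nonempty then T.inf' hT (fun i => l i / (-μ i)) else 1 with hε
  have hεpos : 0 < ε := by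
    rw [hε]
    split
    · rename_i hTne
      rw [Finset.lt_inf'_iff]
      intro i hi
      simp only [hT, Finset.mem_filter, Finset.mem_univ, true_and] at hi
      have hlpos : 0 < l i := lt_of_le_of_ne (hl.1 i) (Ne.symm hi.1)
      exact div_pos hlpos (by linarith [hi.2])
    · exact one_pos
  have hfeas' : l + ε • μ ∈ feas v x n := by
    refine ⟨?_, ?_, ?_⟩
    · intro i
      simp only [Pi.add_apply, Pi.smul_apply, smul_eq_mul]
      rcases le_or_gt 0 (μ i) with hμi | hμi
      · have := hl.1 i; nlinarith
      · have hlne : l i ≠ 0 := by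
          intro h0
          have := h3 i h0
          linarith
        have hiT : i ∈ T := by simp [hT, hlne, hμi]
        have hle : ε ≤ l i / (-μ i) := by
          rw [hε, dif_pos ⟨i, hiT⟩]
          exact Finset.inf'_le _ hiT
        rw [le_div_iff₀ (by linarith)] at hle
        nlinarith
    · have : ∑ i, (l + ε • μ) i • v i = ∑ i, l i • v i + ε • ∑ i, μ i • v i := by
        rw [Finset.smul_sum, ← Finset.sum_add_distrib]
        congr 1
        funext i
        simp [add_smul, smul_smul]
      rw [this, h1, hl.2.1, smul_zero, add_zero]
    · have : ∑ i, (l + ε • μ) i = ∑ i, l i + ε * ∑ i, μ i := by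
        rw [Finset.mul_sum, ← Finset.sum_add_distrib]
        simp [mul_comm]
      rw [this, h2, hl.2.2, mul_zero, add_zero]
  have hlt : LexLt (l + ε • μ) l := by
    obtain ⟨j, hj, hj2⟩ := hlex
    simp only [Pi.zero_apply] at hj
    refine ⟨j, ?_, ?_⟩
    · simp only [Pi.add_apply, Pi.smul_apply, smul_eq_mul]
      nlinarith
    · intro i hi
      have := hj2 i hi
      simp only [Pi.zero_apply] at this
      simp [this]
  rcases hmin _ hfeas' with heq | hlt'
  · obtain ⟨j, hj, _⟩ := hlt
    rw [← heq] at hj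
    exact lt_irrefl _ hj
  · exact lexLt_asymm hlt hlt'

lemma good_lexmin {v : Fin m → Fin k → ℝ} {x : Fin k → ℝ} {n : ℝ} {S : Finset (Fin m)}
    (hS : Good v S) {l : Fin m → ℝ} (hl : l ∈ feas v x n)
    (hzero : ∀ i ∉ S, l i = 0) :
    ∀ l' ∈ feas v x n, l = l' ∨ LexLt l l' := by
  intro l' hl'
  by_contra hc
  push_neg at hc
  obtain ⟨hne, hnlt⟩ := hc
  have hlt : LexLt l' l := (lexLt_of_ne hne).resolve_left hnlt
  set μ := l' - l with hμ
  refine hS μ ?_ ?_ ?_ ?_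
  · have : ∑ i, μ i • v i = ∑ i, l' i • v i - ∑ i, l i • v i := by
      rw [← Finset.sum_sub_distrib]
      congr 1; funext i; simp [hμ, sub_smul]
    rw [this, hl'.2.1, hl.2.1, sub_self]
  · have : ∑ i, μ i = ∑ i, l' i - ∑ i, l i := by
      rw [← Finset.sum_sub_distrib]
      simp [hμ]
    rw [this, hl'.2.2, hl.2.2, sub_self]
  · intro i hi
    have := hzero i hi
    simp [hμ, this, hl'.1 i]
  · obtain ⟨j, hj, hj2⟩ := hlt
    refine ⟨j, by simp [hμ]; linarith, fun i hi => by simp [hμ, hj2 i hi]⟩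


variable {k m : ℕ}

def BoxSet (D : ℕ) (v : Fin m → Fin k → ℝ) (S : Finset (Fin m)) : Set (Fin m → ℝ) :=
  {t | (∀ i ∈ S, 0 < t i ∧ t i ≤ 1) ∧ (∀ i ∉ S, t i = 0) ∧
       (∀ j, ∃ z : ℤ, (D:ℝ) * ∑ i, t i * v i j = z) ∧ (∃ z : ℤ, (D:ℝ) * ∑ i, t i = z)}

lemma boxset_nonneg {D : ℕ} {v : Fin m → Fin k → ℝ} {S : Finset (Fin m)}
    {t : Fin m → ℝ} (ht : t ∈ BoxSet D v S) (i : Fin m) : 0 ≤ t i := by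
  by_cases hi : i ∈ S
  · exact le_of_lt (ht.1 i hi).1
  · exact le_of_eq (ht.2.1 i hi).symm

lemma boxset_le_one {D : ℕ} {v : Fin m → Fin k → ℝ} {S : Finset (Fin m)}
    {t : Fin m → ℝ} (ht : t ∈ BoxSet D v S) (i : Fin m) : t i ≤ 1 := by
  by_cases hi : i ∈ S
  · exact (ht.1 i hi).2
  · rw [ht.2.1 i hi]; exact zero_le_one

lemma boxset_sum_eq {D : ℕ} {v : Fin m → Fin k → ℝ} {S : Finset (Fin m)}
    {t : Fin m → ℝ} (ht : t ∈ BoxSet D v S) : ∑ i, t i = ∑ i ∈ S, t i := by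
  rw [Finset.sum_subset (Finset.subset_univ S)]
  intro i _ hi
  exact ht.2.1 i hi

lemma box_height_bounds {D : ℕ} (hD : 1 ≤ D) {v : Fin m → Fin k → ℝ} {S : Finset (Fin m)}
    (hSne : S.Nonempty) {t : Fin m → ℝ} (ht : t ∈ BoxSet D v S) {z : ℤ}
    (hz : (D:ℝ) * ∑ i, t i = z) : 1 ≤ z ∧ z ≤ D * S.card := by
  have hsum : ∑ i, t i = ∑ i ∈ S, t i := boxset_sum_eq ht
  have hpos : 0 < ∑ i ∈ S, t i :=
    Finset.sum_pos (fun i hi => (ht.1 i hi).1) hSne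
  have hle : ∑ i ∈ S, t i ≤ S.card := by
    calc ∑ i ∈ S, t i ≤ ∑ _i ∈ S, (1:ℝ) :=
          Finset.sum_le_sum fun i hi => (ht.1 i hi).2
      _ = S.card := by simp
  have hDpos : (0:ℝ) < D := by exact_mod_cast Nat.lt_of_lt_of_le Nat.zero_lt_one hD
  constructor
  · have : (0:ℝ) < z := by rw [← hz, hsum]; positivity
    have h0 : (0:ℤ) < z := by exact_mod_cast this
    omega
  · have : (z:ℝ) ≤ (D:ℝ) * S.card := by
      rw [← hz, hsum]
      exact mul_le_mul_of_nonneg_left hle (le_of_lt hDpos)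
    exact_mod_cast this

lemma box_finite {D : ℕ} (hD : 1 ≤ D) {v : Fin m → Fin k → ℝ} {S : Finset (Fin m)}
    (hS : Good v S) : (BoxSet D v S).Finite := by
  classical
  set F : (Fin m → ℝ) → ((Fin k → ℤ) × ℤ) := fun t =>
    (fun j => round ((D:ℝ) * ∑ i, t i * v i j), round ((D:ℝ) * ∑ i, t i)) with hF
  have hDpos : (0:ℝ) < D := by exact_mod_cast Nat.lt_of_lt_of_le Nat.zero_lt_one hD
  have hinj : Set.InjOn F (BoxSet D v S) := by
    intro t ht t' ht' heq
    have hcoord : ∀ j, (D:ℝ) * ∑ i, t i * v i j = (D:ℝ) * ∑ i, t' i * v i j := by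
      intro j
      obtain ⟨z, hz⟩ := ht.2.2.1 j
      obtain ⟨z', hz'⟩ := ht'.2.2.1 j
      have h1 : (F t).1 j = (F t').1 j := by rw [heq]
      simp only [hF] at h1
      rw [hz, hz', round_intCast, round_intCast] at h1
      rw [hz, hz', h1]
    have hμ : (t - t') = 0 := by
      apply good_indep hS
      · funext j
        have h2 := mul_left_cancel₀ (ne_of_gt hDpos) (hcoord j)
        have hL : (∑ i, (t - t') i • v i) j = ∑ i, (t i - t' i) * (v i j) := by
          rw [Finset.sum_apply]
          exact Finset.sum_congr rfl fun i _ => by simp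
        simp only [Pi.zero_apply, hL, sub_mul, Finset.sum_sub_distrib, h2, sub_self]
      · have hht := mul_left_cancel₀ (ne_of_gt hDpos) (by
          obtain ⟨z, hz⟩ := ht.2.2.2
          obtain ⟨z', hz'⟩ := ht'.2.2.2
          have h1 : (F t).2 = (F t').2 := by rw [heq]
          simp only [hF] at h1
          rw [hz, hz', round_intCast, round_intCast] at h1
          rw [hz, hz', h1] : (D:ℝ) * ∑ i, t i = (D:ℝ) * ∑ i, t' i)
        simp only [Pi.sub_apply, Finset.sum_sub_distrib, hht, sub_self]
      · intro i hi
        simp [ht.2.1 i hi, ht'.2.1 i hi]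
    exact sub_eq_zero.1 hμ
  set R : Fin k → ℝ := fun j => (D:ℝ) * ∑ i, |v i j| with hR
  have himg : (F '' BoxSet D v S).Finite := by
    apply Set.Finite.subset
      (Set.Finite.prod
        (Set.Finite.pi (fun j => Set.finite_Icc (-(⌈R j⌉)) ⌈R j⌉))
        (Set.finite_Icc (0:ℤ) (D * m)))
    rintro p ⟨t, ht, rfl⟩
    constructor
    · intro j _
      obtain ⟨z, hz⟩ := ht.2.2.1 j
      have hzval : (F t).1 j = z := by simp only [hF]; rw [hz, round_intCast]
      have habs : |(z:ℝ)| ≤ R j := by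
        rw [← hz, hR, abs_mul, abs_of_pos hDpos]
        apply mul_le_mul_of_nonneg_left _ (le_of_lt hDpos)
        calc |∑ i, t i * v i j| ≤ ∑ i, |t i * v i j| := Finset.abs_sum_le_sum_abs _ _
          _ ≤ ∑ i, |v i j| := by
              apply Finset.sum_le_sum
              intro i _
              rw [abs_mul, abs_of_nonneg (boxset_nonneg ht i)]
              calc t i * |v i j| ≤ 1 * |v i j| :=
                    mul_le_mul_of_nonneg_right (boxset_le_one ht i) (abs_nonneg _)
                _ = |v i j| := one_mul _
      rw [hzval]
      constructor
      · have : -(⌈R j⌉ : ℝ) ≤ (z:ℝ) := by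
          have := neg_abs_le (z:ℝ)
          have h2 : -(R j) ≤ (z:ℝ) := by linarith
          have h3 : (R j) ≤ (⌈R j⌉ : ℝ) := Int.le_ceil _
          linarith
        exact_mod_cast this
      · have : (z:ℝ) ≤ (⌈R j⌉ : ℝ) := by
          have := le_abs_self (z:ℝ)
          have h3 : (R j) ≤ (⌈R j⌉ : ℝ) := Int.le_ceil _
          linarith
        exact_mod_cast this
    · obtain ⟨z, hz⟩ := ht.2.2.2
      have hzval : (F t).2 = z := by simp only [hF]; rw [hz, round_intCast]
      rw [hzval]
      have hsumnn : 0 ≤ ∑ i, t i := Finset.sum_nonneg fun i _ => boxset_nonneg ht i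
      have hsumle : ∑ i, t i ≤ (m:ℝ) := by
        calc ∑ i, t i ≤ ∑ _i : Fin m, (1:ℝ) :=
              Finset.sum_le_sum fun i _ => boxset_le_one ht i
          _ = m := by simp
      constructor
      · have : (0:ℝ) ≤ (z:ℝ) := by rw [← hz]; positivity
        exact_mod_cast this
      · have : (z:ℝ) ≤ ((D * m : ℕ):ℝ) := by
          rw [← hz]
          push_cast
          exact mul_le_mul_of_nonneg_left hsumle (le_of_lt hDpos)
        exact_mod_cast this
  exact Set.Finite.of_finite_image himg hinj

variable {k m : ℕ}

lemma card_pi_sum_eq (α : Type) [Fintype α] [DecidableEq α] (hα : 1 ≤ Fintype.card α)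
    (M : ℕ) : Nat.card {c : α → ℕ // ∑ i, c i = M} =
      (M + Fintype.card α - 1).choose (Fintype.card α - 1) := by
  classical
  have hcard : ∀ f : α →₀ ℕ, Multiset.card (Finsupp.toMultiset f) = ∑ i, f i := by
    intro f
    rw [Finsupp.card_toMultiset, Finsupp.sum_fintype _ _ (fun i => rfl)]
    rfl
  have e : {c : α → ℕ // ∑ i, c i = M} ≃ {s : Multiset α // Multiset.card s = M} := by
    refine Equiv.subtypeEquiv
      ((Finsupp.equivFunOnFinite.symm).trans Multiset.toFinsupp.symm.toEquiv) ?_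
    intro c
    have hms : (Multiset.toFinsupp.symm.toEquiv (Finsupp.equivFunOnFinite.symm c) : Multiset α)
        = Finsupp.toMultiset (Finsupp.equivFunOnFinite.symm c) := rfl
    simp only [Equiv.trans_apply, hms, hcard]
    constructor
    · intro hc; rw [← hc]; apply Finset.sum_congr rfl; intro i _; simp
    · intro hc; rw [← hc]; apply Finset.sum_congr rfl; intro i _; simp
  rw [Nat.card_congr e]
  have : Nat.card {s : Multiset α // Multiset.card s = M} = Nat.card (Sym α M) := rfl
  rw [this, Nat.card_eq_fintype_card, Sym.card_sym_eq_choose]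
  rw [← Nat.choose_symm (by omega : M ≤ Fintype.card α + M - 1)]
  congr 1
  · omega
  · omega

lemma sum_subtype_eq_sum_univ (S : Finset (Fin m)) (c : Fin m → ℕ)
    (hc : ∀ i ∉ S, c i = 0) : ∑ i : ↥S, c i = ∑ i, c i := by
  rw [Finset.univ_eq_attach, Finset.sum_attach S c]
  exact Finset.sum_subset (Finset.subset_univ S) (fun i _ hi => hc i hi)

lemma card_compset (S : Finset (Fin m)) (hSne : S.Nonempty) {D : ℕ} (hD : 1 ≤ D) (h n : ℕ) :
    Nat.card {c : Fin m → ℕ // (∀ i ∉ S, c i = 0) ∧ h + D * ∑ i, c i = n}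
      = if h ≤ n ∧ D ∣ (n - h) then ((n - h)/D + S.card - 1).choose (S.card - 1) else 0 := by
  classical
  split
  · rename_i hcond
    obtain ⟨hhn, hdvd⟩ := hcond
    set M := (n - h)/D with hM
    have hDM : D * M = n - h := Nat.mul_div_cancel' hdvd
    have e1 : {c : Fin m → ℕ // (∀ i ∉ S, c i = 0) ∧ h + D * ∑ i, c i = n}
        ≃ {c : Fin m → ℕ // (∀ i ∉ S, c i = 0) ∧ ∑ i, c i = M} := by
      refine Equiv.subtypeEquiv (Equiv.refl _) ?_
      intro c
      simp only [Equiv.refl_apply, and_congr_right_iff]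
      intro _
      constructor
      · intro hc
        have h2 : D * ∑ i, c i = D * M := by omega
        exact Nat.eq_of_mul_eq_mul_left (by omega) h2
      · intro hc; rw [hc]; omega
    have e2 : {c : Fin m → ℕ // (∀ i ∉ S, c i = 0) ∧ ∑ i, c i = M}
        ≃ {c : ↥S → ℕ // ∑ i, c i = M} := by
      refine ⟨fun c => ⟨fun i => c.1 i, ?_⟩,
        fun d => ⟨fun i => if hi : i ∈ S then d.1 ⟨i, hi⟩ else 0, ?_, ?_⟩, ?_, ?_⟩
      · show ∑ i : ↥S, c.1 i = M
        rw [sum_subtype_eq_sum_univ S c.1 c.2.1]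
        exact c.2.2
      · intro i hi; simp [hi]
      · rw [← sum_subtype_eq_sum_univ S _ (fun i hi => by simp [hi])]
        have heq : (∑ i : ↥S, if hi : (i : Fin m) ∈ S then d.1 ⟨i, hi⟩ else 0)
            = ∑ i : ↥S, d.1 i := Finset.sum_congr rfl (fun i _ => by simp [i.2])
        rw [heq]
        exact d.2
      · intro c
        apply Subtype.ext
        funext i
        by_cases hi : i ∈ S
        · simp [hi]
        · simp [hi, c.2.1 i hi]
      · intro d
        apply Subtype.ext
        funext i
        simp [i.2]
    rw [Nat.card_congr (e1.trans e2),
      card_pi_sum_eq ↥S (by simpa [Fintype.card_coe] using hSne.card_pos) M]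
    rw [Fintype.card_coe]
  · rename_i hcond
    have : IsEmpty {c : Fin m → ℕ // (∀ i ∉ S, c i = 0) ∧ h + D * ∑ i, c i = n} := by
      constructor
      rintro ⟨c, _, hc2⟩
      exact hcond ⟨by omega, ⟨∑ i, c i, by omega⟩⟩
    simp only [Nat.card_of_isEmpty]

lemma finite_compset (S : Finset (Fin m)) {D : ℕ} (hD : 1 ≤ D) (h n : ℕ) :
    Finite {c : Fin m → ℕ // (∀ i ∉ S, c i = 0) ∧ h + D * ∑ i, c i = n} := by
  classical
  apply Finite.of_injective
    (f := fun c : {c : Fin m → ℕ // (∀ i ∉ S, c i = 0) ∧ h + D * ∑ i, c i = n} =>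
      (fun i => (⟨min (c.1 i) n, by omega⟩ : Fin (n+1))))
  intro c c' hcc
  apply Subtype.ext
  funext i
  have hs1 : c.1 i ≤ ∑ j, c.1 j := Finset.single_le_sum (fun j _ => Nat.zero_le _) (Finset.mem_univ i)
  have hs2 : c'.1 i ≤ ∑ j, c'.1 j := Finset.single_le_sum (fun j _ => Nat.zero_le _) (Finset.mem_univ i)
  have h1 : c.1 i ≤ n := by
    have h3 := c.2.2
    have h4 : ∑ j, c.1 j ≤ D * ∑ j, c.1 j := Nat.le_mul_of_pos_left _ (by omega)
    omega
  have h2 : c'.1 i ≤ n := by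
    have h3 := c'.2.2
    have h4 : ∑ j, c'.1 j ≤ D * ∑ j, c'.1 j := Nat.le_mul_of_pos_left _ (by omega)
    omega
  have := congrFun hcc i
  simp only [Fin.mk.injEq] at this
  omega
variable {k m : ℕ}

noncomputable def boxH (D : ℕ) (t : Fin m → ℝ) : ℕ := (round ((D:ℝ) * ∑ i, t i)).toNat

lemma boxH_spec {D : ℕ} (hD : 1 ≤ D) {v : Fin m → Fin k → ℝ} {S : Finset (Fin m)}
    (hSne : S.Nonempty) {t : Fin m → ℝ} (ht : t ∈ BoxSet D v S) :
    ((boxH D t : ℕ) : ℝ) = (D:ℝ) * ∑ i, t i ∧ 1 ≤ boxH D t ∧ boxH D t ≤ D * S.card := by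
  obtain ⟨z, hz⟩ := ht.2.2.2
  obtain ⟨hz1, hz2⟩ := box_height_bounds hD hSne ht hz
  have hr : boxH D t = z.toNat := by rw [boxH, hz, round_intCast]
  have hzr : ((z.toNat : ℕ) : ℤ) = z := Int.toNat_of_nonneg (by omega)
  refine ⟨?_, by omega, by omega⟩
  rw [hr, hz]
  exact_mod_cast congrArg (fun w : ℤ => (w : ℝ)) hzr

lemma nat_unit_decomp {a b : ℕ} {s u : ℝ} (hs : 0 < s) (hs1 : s ≤ 1) (hu : 0 < u) (hu1 : u ≤ 1)
    (h : (a:ℝ) + s = (b:ℝ) + u) : a = b ∧ s = u := by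
  have hab : a = b := by
    rcases lt_trichotomy a b with hlt | heq | hgt
    · exfalso
      have : (a:ℝ) + 1 ≤ (b:ℝ) := by exact_mod_cast Nat.succ_le_of_lt hlt
      linarith
    · exact heq
    · exfalso
      have : (b:ℝ) + 1 ≤ (a:ℝ) := by exact_mod_cast Nat.succ_le_of_lt hgt
      linarith
  refine ⟨hab, ?_⟩
  rw [hab] at h
  linarith

theorem master {k m D : ℕ} (hD : 1 ≤ D) (v : Fin m → Fin k → ℝ)
    (hv : ∀ i j, ∃ z : ℤ, (D:ℝ) * v i j = z) :
    ∃ (N : ℕ) (hB sB : Fin N → ℕ),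
      (∀ a, 1 ≤ sB a ∧ sB a ≤ m ∧ 1 ≤ hB a ∧ hB a ≤ D * sB a) ∧
      ∀ n : ℕ, 1 ≤ n →
        {x : Fin k → ℝ | (∀ j, ∃ z : ℤ, x j = (z:ℝ)) ∧ (feas v x (n:ℝ)).Nonempty}.ncard
          = ∑ a, if hB a ≤ n ∧ D ∣ (n - hB a) then
              ((n - hB a)/D + sB a - 1).choose (sB a - 1) else 0 := by
  classical
  have hDpos : (0:ℝ) < D := by exact_mod_cast Nat.lt_of_lt_of_le Nat.zero_lt_one hD
  set A : Set (Finset (Fin m) × (Fin m → ℝ)) :=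
    {q | (Good v q.1 ∧ q.1.Nonempty) ∧ q.2 ∈ BoxSet D v q.1} with hA
  have hAfin : A.Finite := by
    have hsub : A ⊆ ⋃ S : Finset (Fin m),
        ({S} : Set (Finset (Fin m))) ×ˢ (if Good v S then BoxSet D v S else ∅) := by
      rintro ⟨S, t⟩ ⟨⟨hG, _⟩, hbox⟩
      refine Set.mem_iUnion.2 ⟨S, ?_⟩
      refine ⟨rfl, ?_⟩
      simp only [if_pos hG]
      exact hbox
    refine Set.Finite.subset (Set.finite_iUnion ?_) hsub
    intro S
    refine Set.Finite.prod (Set.finite_singleton _) ?_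
    split
    · rename_i hG; exact box_finite hD hG
    · exact Set.finite_empty
  haveI hPTfin : Finite ↥A := hAfin.to_subtype
  haveI : Fintype ↥A := Fintype.ofFinite _
  set N := Fintype.card ↥A with hN
  set ePT : ↥A ≃ Fin N := Fintype.equivFin ↥A with hePT
  set hB : Fin N → ℕ := fun a => boxH D (ePT.symm a).1.2 with hhB
  set sB : Fin N → ℕ := fun a => (ePT.symm a).1.1.card with hsB
  refine ⟨N, hB, sB, ?_, ?_⟩
  · intro a
    have h := boxH_spec hD (ePT.symm a).2.1.2 (ePT.symm a).2.2
    have hscard : 1 ≤ (ePT.symm a).1.1.card := (ePT.symm a).2.1.2.card_pos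
    have hcardle : (ePT.symm a).1.1.card ≤ m := by
      simpa using Finset.card_le_univ (ePT.symm a).1.1
    exact ⟨hscard, hcardle, h.2.1, h.2.2⟩
  intro n hn
  -- the composition sets
  set CT : ↥A → Type := fun p =>
    {c : Fin m → ℕ // (∀ i ∉ p.1.1, c i = 0) ∧ boxH D p.1.2 + D * ∑ i, c i = n} with hCT
  haveI : ∀ p : ↥A, Fintype (CT p) := fun p =>
    @Fintype.ofFinite _ (finite_compset p.1.1 hD (boxH D p.1.2) n)
  -- properties of the lambda function associated to a piece and composition
  have lam_props : ∀ (S : Finset (Fin m)) (t : Fin m → ℝ), Good v S → S.Nonempty →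
      t ∈ BoxSet D v S → ∀ c : Fin m → ℕ, (∀ i ∉ S, c i = 0) →
      boxH D t + D * ∑ i, c i = n →
      (fun i => (D:ℝ) * ((c i : ℝ) + t i)) ∈
          feas v (∑ i, ((D:ℝ) * ((c i : ℝ) + t i)) • v i) (n:ℝ) ∧
        (∀ i ∉ S, (D:ℝ) * ((c i : ℝ) + t i) = 0) ∧
        (∀ i ∈ S, 0 < (D:ℝ) * ((c i : ℝ) + t i)) ∧
        (∀ j, ∃ z : ℤ, (∑ i, ((D:ℝ) * ((c i : ℝ) + t i)) • v i) j = (z:ℝ)) := by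
    intro S t hG hSne hbox c hc0 hcsum
    have hbH := (boxH_spec hD hSne hbox).1
    have hsum : ∑ i, (D:ℝ) * ((c i : ℝ) + t i) = (n:ℝ) := by
      have h1 : ∑ i, (D:ℝ) * ((c i : ℝ) + t i)
          = (D:ℝ) * (∑ i, (c i : ℝ)) + (D:ℝ) * ∑ i, t i := by
        rw [Finset.mul_sum, Finset.mul_sum, ← Finset.sum_add_distrib]
        exact Finset.sum_congr rfl fun i _ => by ring
      rw [h1, ← hbH]
      have h2 : ((boxH D t : ℕ) : ℝ) + (D:ℝ) * ((∑ i, c i : ℕ) : ℝ) = (n : ℝ) := by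
        exact_mod_cast congrArg (fun w : ℕ => (w : ℝ)) hcsum
      push_cast at h2 ⊢
      linarith
    refine ⟨⟨?_, rfl, hsum⟩, ?_, ?_, ?_⟩
    · intro i
      have := boxset_nonneg hbox i
      positivity
    · intro i hi
      rw [hc0 i hi, hbox.2.1 i hi]
      simp
    · intro i hi
      have h1 := (hbox.1 i hi).1
      have h2 : (0:ℝ) ≤ (c i : ℝ) := Nat.cast_nonneg _
      nlinarith
    · intro j
      obtain ⟨zb, hzb⟩ := hbox.2.2.1 j
      refine ⟨(∑ i, (c i : ℤ) * Classical.choose (hv i j)) + zb, ?_⟩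
      have hsa : (∑ i, ((D:ℝ) * ((c i : ℝ) + t i)) • v i) j
          = ∑ i, ((D:ℝ) * ((c i : ℝ) + t i)) * v i j := by
        rw [Finset.sum_apply]
        exact Finset.sum_congr rfl fun i _ => rfl
      rw [hsa]
      have hterm : ∀ i, ((D:ℝ) * ((c i : ℝ) + t i)) * v i j
          = (c i : ℝ) * ((D:ℝ) * v i j) + (D:ℝ) * (t i * v i j) := by
        intro i; ring
      rw [Finset.sum_congr rfl fun i _ => hterm i, Finset.sum_add_distrib,
        ← Finset.mul_sum, hzb]
      have : ∑ i, (c i : ℝ) * ((D:ℝ) * v i j)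
          = ∑ i, (c i : ℝ) * ((Classical.choose (hv i j) : ℤ) : ℝ) := by
        exact Finset.sum_congr rfl fun i _ =>
          congrArg (fun w => ((c i : ℕ) : ℝ) * w) (Classical.choose_spec (hv i j))
      rw [this]
      push_cast
      ring
  -- the bijection
  set Lset : Set (Fin k → ℝ) :=
    {x | (∀ j, ∃ z : ℤ, x j = (z:ℝ)) ∧ (feas v x (n:ℝ)).Nonempty} with hLset
  set F : (Σ p : ↥A, CT p) → ↥Lset := fun a =>
    ⟨∑ i, ((D:ℝ) * ((a.2.1 i : ℝ) + a.1.1.2 i)) • v i,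
      by
        obtain ⟨hfeas, _, _, hint⟩ := lam_props a.1.1.1 a.1.1.2 a.1.2.1.1 a.1.2.1.2 a.1.2.2
          a.2.1 a.2.2.1 a.2.2.2
        exact ⟨hint, ⟨_, hfeas⟩⟩⟩ with hF
  have hbij : Function.Bijective F := by
    constructor
    · rintro ⟨⟨⟨S, t⟩, hPT⟩, ⟨c, hc⟩⟩ ⟨⟨⟨S', t'⟩, hPT'⟩, ⟨c', hc'⟩⟩ heq
      have hx : (∑ i, ((D:ℝ) * ((c i : ℝ) + t i)) • v i)
          = (∑ i, ((D:ℝ) * ((c' i : ℝ) + t' i)) • v i) := congrArg Subtype.val heq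
      obtain ⟨hfeas, hz0, hzpos, _⟩ :=
        lam_props S t hPT.1.1 hPT.1.2 hPT.2 c hc.1 hc.2
      obtain ⟨hfeas', hz0', hzpos', _⟩ :=
        lam_props S' t' hPT'.1.1 hPT'.1.2 hPT'.2 c' hc'.1 hc'.2
      rw [← hx] at hfeas'
      have hlex := good_lexmin hPT.1.1 hfeas (fun i hi => hz0 i hi)
      have hlex' := good_lexmin hPT'.1.1 hfeas' (fun i hi => hz0' i hi)
      have hll' : (fun i => (D:ℝ) * ((c i : ℝ) + t i))
          = (fun i => (D:ℝ) * ((c' i : ℝ) + t' i)) := by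
        rcases hlex _ hfeas' with h | h
        · exact h
        · rcases hlex' _ hfeas with h2 | h2
          · exact h2.symm
          · exact absurd h2 (fun h2 => lexLt_asymm h h2)
      have hSS' : S = S' := by
        ext i
        constructor
        · intro hi
          by_contra hi'
          have h1 := hzpos i hi
          have h2 := hz0' i hi'
          rw [congrFun hll' i] at h1
          rw [h2] at h1
          exact lt_irrefl _ h1
        · intro hi
          by_contra hi'
          have h1 := hzpos' i hi
          have h2 := hz0 i hi'
          rw [← congrFun hll' i] at h1
          rw [h2] at h1
          exact lt_irrefl _ h1
      subst hSS'
      have htc : t = t' ∧ c = c' := by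
        have hkey : ∀ i, t i = t' i ∧ c i = c' i := by
          intro i
          by_cases hi : i ∈ S
          · have h1 := congrFun hll' i
            have h2 : (c i : ℝ) + t i = (c' i : ℝ) + t' i :=
              mul_left_cancel₀ (ne_of_gt hDpos) h1
            obtain ⟨hcc, htt⟩ := nat_unit_decomp (hPT.2.1 i hi).1 (hPT.2.1 i hi).2
              (hPT'.2.1 i hi).1 (hPT'.2.1 i hi).2 h2
            exact ⟨htt, hcc⟩
          · have e1 : t i = 0 := hPT.2.2.1 i hi
            have e2 : t' i = 0 := hPT'.2.2.1 i hi
            have e3 : c i = 0 := hc.1 i hi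
            have e4 : c' i = 0 := hc'.1 i hi
            exact ⟨by rw [e1, e2], by rw [e3, e4]⟩
        exact ⟨funext fun i => (hkey i).1, funext fun i => (hkey i).2⟩
      obtain ⟨ht, hcfun⟩ := htc
      subst ht
      subst hcfun
      rfl
    · rintro ⟨x, hxlat, hxfeas⟩
      obtain ⟨l, hl, hmin⟩ := exists_lexmin (feas_isCompact v x (n:ℝ)) hxfeas
      set S := Finset.univ.filter (fun i => l i ≠ 0) with hSdef
      have hGood : Good v S := lexmin_good hl hmin
      have hSne : S.Nonempty := by
        by_contra hcon
        rw [Finset.not_nonempty_iff_eq_empty] at hcon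
        have hl0 : ∀ i, l i = 0 := by
          intro i
          by_contra hne
          have hiS : i ∈ S := by simp [hSdef, hne]
          rw [hcon] at hiS
          exact absurd hiS (Finset.notMem_empty i)
        have hsum := hl.2.2
        rw [Finset.sum_eq_zero (fun i _ => hl0 i)] at hsum
        have : (n:ℝ) ≠ 0 := by positivity
        exact this hsum.symm
      have hlpos : ∀ i ∈ S, 0 < l i := by
        intro i hi
        have hne : l i ≠ 0 := by simpa [hSdef] using hi
        exact lt_of_le_of_ne (hl.1 i) (Ne.symm hne)
      have hlzero : ∀ i ∉ S, l i = 0 := by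
        intro i hi
        by_contra hne
        exact hi (by simp [hSdef, hne])
      set c : Fin m → ℕ := fun i => if i ∈ S then (⌈l i / (D:ℝ)⌉ - 1).toNat else 0 with hcdef
      set t : Fin m → ℝ := fun i => if i ∈ S then l i / (D:ℝ) - (c i : ℝ) else 0 with htdef
      have hceil : ∀ i ∈ S, ((c i : ℕ):ℝ) = (⌈l i / (D:ℝ)⌉:ℝ) - 1 := by
        intro i hi
        have hpos : 0 < l i / (D:ℝ) := div_pos (hlpos i hi) hDpos
        have h1 : 1 ≤ ⌈l i / (D:ℝ)⌉ := by
          have := Int.ceil_pos.2 hpos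
          omega
        have h2 : (((⌈l i / (D:ℝ)⌉ - 1).toNat : ℕ) : ℤ) = ⌈l i / (D:ℝ)⌉ - 1 :=
          Int.toNat_of_nonneg (by omega)
        calc ((c i : ℕ):ℝ) = (((⌈l i / (D:ℝ)⌉ - 1).toNat : ℕ):ℝ) := by
              rw [hcdef]; simp [hi]
          _ = ((⌈l i / (D:ℝ)⌉ - 1 : ℤ):ℝ) := by exact_mod_cast congrArg (fun w : ℤ => (w:ℝ)) h2
          _ = (⌈l i / (D:ℝ)⌉:ℝ) - 1 := by push_cast; ring
      have htpos : ∀ i ∈ S, 0 < t i ∧ t i ≤ 1 := by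
        intro i hi
        have h1 := Int.ceil_lt_add_one (l i / (D:ℝ))
        have h2 := Int.le_ceil (l i / (D:ℝ))
        have h3 := hceil i hi
        rw [htdef]
        simp only [if_pos hi]
        constructor
        · linarith
        · linarith
      have hlam : ∀ i, (D:ℝ) * ((c i : ℝ) + t i) = l i := by
        intro i
        by_cases hi : i ∈ S
        · rw [htdef]
          simp only [if_pos hi]
          field_simp
          ring
        · have hl0 : l i = 0 := hlzero i hi
          rw [htdef, hcdef]
          simp [hi, hl0]
      have hDt : ∀ i, (D:ℝ) * t i = l i - (D:ℝ) * (c i : ℝ) := by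
        intro i
        have := hlam i
        ring_nf at this ⊢
        linarith
      have hbox : t ∈ BoxSet D v S := by
        refine ⟨htpos, fun i hi => by rw [htdef]; simp [hi], ?_, ?_⟩
        · intro j
          obtain ⟨zx, hzx⟩ := hxlat j
          refine ⟨zx - ∑ i, (c i : ℤ) * Classical.choose (hv i j), ?_⟩
          have hxj : ∑ i, l i * v i j = x j := by
            have h0 : (∑ i, l i • v i) j = x j := congrFun hl.2.1 j
            rw [Finset.sum_apply] at h0
            rw [← h0]
            exact Finset.sum_congr rfl fun i _ => rfl
          calc (D:ℝ) * ∑ i, t i * v i j = ∑ i, ((D:ℝ) * t i) * v i j := by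
                rw [Finset.mul_sum]
                exact Finset.sum_congr rfl fun i _ => by ring
            _ = ∑ i, (l i * v i j - (c i : ℝ) * ((D:ℝ) * v i j)) := by
                refine Finset.sum_congr rfl fun i _ => ?_
                rw [hDt i]
                ring
            _ = (∑ i, l i * v i j) - ∑ i, (c i : ℝ) * ((D:ℝ) * v i j) :=
                Finset.sum_sub_distrib _ _
            _ = (zx : ℝ) - ∑ i, (c i : ℝ) * ((Classical.choose (hv i j) : ℤ) : ℝ) := by
                rw [hxj, hzx]
                congr 1
                exact Finset.sum_congr rfl fun i _ =>
                  congrArg (fun w => ((c i : ℕ) : ℝ) * w) (Classical.choose_spec (hv i j))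
            _ = ((zx - ∑ i, (c i : ℤ) * Classical.choose (hv i j) : ℤ) : ℝ) := by
                push_cast
                ring
        · refine ⟨(n : ℤ) - (D:ℤ) * ∑ i, (c i : ℤ), ?_⟩
          have hsuml : ∑ i, l i = (n:ℝ) := hl.2.2
          have : (D:ℝ) * ∑ i, t i = ∑ i, ((D:ℝ) * t i) := Finset.mul_sum _ _ _
          rw [this, Finset.sum_congr rfl fun i _ => hDt i, Finset.sum_sub_distrib, hsuml,
            ← Finset.mul_sum]
          push_cast
          ring
      have hcomp0 : ∀ i ∉ S, c i = 0 := by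
        intro i hi
        rw [hcdef]
        simp [hi]
      have hcomps : boxH D t + D * ∑ i, c i = n := by
        have hspec := (boxH_spec hD hSne hbox).1
        have hsuml : ∑ i, l i = (n:ℝ) := hl.2.2
        have h1 : (D:ℝ) * ∑ i, t i = (n:ℝ) - (D:ℝ) * ∑ i, (c i : ℝ) := by
          rw [Finset.mul_sum, Finset.sum_congr rfl fun i _ => hDt i, Finset.sum_sub_distrib,
            hsuml, ← Finset.mul_sum]
        have h2 : ((boxH D t : ℕ) : ℝ) + (D:ℝ) * ∑ i, (c i : ℝ) = (n:ℝ) := by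
          rw [hspec, h1]; ring
        have h3 : (((boxH D t + D * ∑ i, c i : ℕ)) : ℝ) = ((n:ℕ) : ℝ) := by
          push_cast
          push_cast at h2
          linarith
        exact_mod_cast h3
      refine ⟨⟨⟨⟨S, t⟩, ⟨⟨hGood, hSne⟩, hbox⟩⟩, ⟨c, hcomp0, hcomps⟩⟩, ?_⟩
      rw [hF]
      apply Subtype.ext
      show ∑ i, ((D:ℝ) * ((c i : ℝ) + t i)) • v i = x
      rw [Finset.sum_congr rfl fun i _ => by rw [hlam i]]
      exact hl.2.1
  -- counting
  have hcount : (Lset).ncard = ∑ p : ↥A, Nat.card (CT p) := by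
    rw [← Nat.card_coe_set_eq]
    rw [Nat.card_congr (Equiv.ofBijective F hbij).symm]
    rw [Nat.card_eq_fintype_card, Fintype.card_sigma]
    exact Finset.sum_congr rfl fun p _ => (Nat.card_eq_fintype_card).symm
  rw [hcount]
  have hterm : ∀ p : ↥A, Nat.card (CT p)
      = if boxH D p.1.2 ≤ n ∧ D ∣ (n - boxH D p.1.2) then
          ((n - boxH D p.1.2)/D + p.1.1.card - 1).choose (p.1.1.card - 1) else 0 := by
    intro p
    exact card_compset p.1.1 p.2.1.2 hD (boxH D p.1.2) n
  rw [Finset.sum_congr rfl fun p _ => hterm p]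
  rw [← Equiv.sum_comp ePT.symm
    (fun p : ↥A => if boxH D p.1.2 ≤ n ∧ D ∣ (n - boxH D p.1.2) then
      ((n - boxH D p.1.2)/D + p.1.1.card - 1).choose (p.1.1.card - 1) else 0)]
variable {k : ℕ}

lemma sum_enum_eq {M : Type*} [AddCommMonoid M] (V : Finset (Fin k → ℝ))
    (f : (Fin k → ℝ) → M) :
    ∑ i : Fin V.card, f ((V.equivFin.symm i : ↥V) : Fin k → ℝ) = ∑ y ∈ V, f y := by
  rw [Equiv.sum_comp V.equivFin.symm (fun y : ↥V => f (y : Fin k → ℝ))]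
  exact Finset.sum_coe_sort V f

lemma bridge (V : Finset (Fin k → ℝ)) (n : ℕ) (hn : 1 ≤ n) :
    {x : Fin k → ℝ | x ∈ (n:ℝ) • (convexHull ℝ (V : Set (Fin k → ℝ))) ∧
        ∀ i, ∃ z : ℤ, x i = (z:ℝ)}
      = {x : Fin k → ℝ | (∀ j, ∃ z : ℤ, x j = (z:ℝ)) ∧
          (feas (fun i : Fin V.card => ((V.equivFin.symm i : ↥V) : Fin k → ℝ)) x (n:ℝ)).Nonempty} := by
  have hnpos : (0:ℝ) < n := by exact_mod_cast Nat.lt_of_lt_of_le Nat.zero_lt_one hn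
  set v : Fin V.card → (Fin k → ℝ) := fun i => ((V.equivFin.symm i : ↥V) : Fin k → ℝ) with hv
  ext x
  simp only [Set.mem_setOf_eq]
  constructor
  · rintro ⟨hx, hint⟩
    refine ⟨hint, ?_⟩
    obtain ⟨y, hy, hxy⟩ := Set.mem_smul_set.1 hx
    rw [Finset.convexHull_eq] at hy
    obtain ⟨w, hw0, hw1, hwy⟩ := hy
    refine ⟨fun i => (n:ℝ) * w (v i), ?_, ?_, ?_⟩
    · intro i
      exact mul_nonneg (le_of_lt hnpos) (hw0 _ (V.equivFin.symm i).2)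
    · have hcm : V.centerMass w id = ∑ y ∈ V, w y • y := by
        rw [Finset.centerMass_eq_of_sum_1 _ _ hw1]
        simp
      have htrans : ∑ i, (w (v i)) • (v i) = ∑ y ∈ V, w y • y :=
        sum_enum_eq V (fun y => w y • y)
      have : ∑ i, ((n:ℝ) * w (v i)) • v i = (n:ℝ) • ∑ i, (w (v i)) • (v i) := by
        rw [Finset.smul_sum]
        exact Finset.sum_congr rfl fun i _ => by rw [smul_smul]
      rw [this, htrans, ← hcm, hwy, hxy]
    · have htrans : ∑ i, w (v i) = ∑ y ∈ V, w y := sum_enum_eq V w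
      rw [← Finset.mul_sum, htrans, hw1, mul_one]
  · rintro ⟨hint, ⟨l, hl0, hlsum, hltot⟩⟩
    refine ⟨?_, hint⟩
    rw [Set.mem_smul_set]
    refine ⟨(n:ℝ)⁻¹ • x, ?_, smul_inv_smul₀ (ne_of_gt hnpos) x⟩
    apply mem_convexHull_of_exists_fintype (fun i => l i / (n:ℝ)) v
    · intro i
      exact div_nonneg (hl0 i) (le_of_lt hnpos)
    · rw [← Finset.sum_div, hltot, div_self (ne_of_gt hnpos)]
    · intro i
      exact Finset.mem_coe.2 (V.equivFin.symm i).2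
    · have : ∑ i, (l i / (n:ℝ)) • v i = (n:ℝ)⁻¹ • ∑ i, l i • v i := by
        rw [Finset.smul_sum]
        refine Finset.sum_congr rfl fun i _ => ?_
        rw [smul_smul, div_eq_inv_mul]
      rw [this, hlsum]
lemma choose_prod (r M : ℕ) :
    ((r.factorial : ℚ)) * (((M + r).choose r : ℕ) : ℚ) = ∏ j ∈ Finset.Icc 1 r, ((M : ℚ) + j) := by
  induction r with
  | zero => simp
  | succ r ih =>
    rw [Finset.prod_Icc_succ_top (by omega : 1 ≤ r + 1), ← ih]
    have hnat : (M + r + 1) * (M + r).choose r = (M + r + 1).choose (r + 1) * (r + 1) :=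
      Nat.add_one_mul_choose_eq (M + r) r
    have hq : ((M:ℚ) + r + 1) * (((M + r).choose r : ℕ) : ℚ)
        = (((M + r + 1).choose (r + 1) : ℕ) : ℚ) * ((r:ℚ) + 1) := by
      exact_mod_cast congrArg (fun w : ℕ => (w : ℚ)) hnat
    have hchoose : (M + (r + 1)).choose (r + 1) = (M + r + 1).choose (r + 1) := by
      congr 1
    rw [hchoose, Nat.factorial_succ]
    push_cast
    push_cast at hq
    linear_combination (-(r.factorial : ℚ)) * hq

noncomputable def qpoly (D h s : ℕ) : Polynomial ℚ :=
  Polynomial.C (((s-1).factorial : ℚ))⁻¹ *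
    ∏ j ∈ Finset.Icc 1 (s-1),
      (Polynomial.C ((D:ℚ)⁻¹) * Polynomial.X + Polynomial.C ((j:ℚ) - (h:ℚ)/(D:ℚ)))

lemma qpoly_eval (D h s n : ℕ) :
    (qpoly D h s).eval (n:ℚ) = (((s-1).factorial : ℚ))⁻¹ *
      ∏ j ∈ Finset.Icc 1 (s-1), (((n:ℚ) - (h:ℚ))/(D:ℚ) + (j:ℚ)) := by
  rw [qpoly, Polynomial.eval_mul, Polynomial.eval_C, Polynomial.eval_prod]
  congr 1
  refine Finset.prod_congr rfl fun j _ => ?_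
  simp only [Polynomial.eval_add, Polynomial.eval_mul, Polynomial.eval_C, Polynomial.eval_X]
  ring

lemma qpoly_natDegree_le (D h s : ℕ) : (qpoly D h s).natDegree ≤ s - 1 := by
  have h2 : ∀ j : ℕ, (Polynomial.C ((D:ℚ)⁻¹) * Polynomial.X
      + Polynomial.C ((j:ℚ) - (h:ℚ)/(D:ℚ))).natDegree ≤ 1 := fun j =>
    Polynomial.natDegree_linear_le
  have h1 : (∏ j ∈ Finset.Icc 1 (s-1),
      (Polynomial.C ((D:ℚ)⁻¹) * Polynomial.X + Polynomial.C ((j:ℚ) - (h:ℚ)/(D:ℚ)))).natDegree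
      ≤ s - 1 := by
    refine le_trans (Polynomial.natDegree_prod_le _ _) ?_
    have h3 : ∑ j ∈ Finset.Icc 1 (s-1), (Polynomial.C ((D:ℚ)⁻¹) * Polynomial.X
        + Polynomial.C ((j:ℚ) - (h:ℚ)/(D:ℚ))).natDegree
        ≤ ∑ _j ∈ Finset.Icc 1 (s-1), 1 := Finset.sum_le_sum fun j _ => h2 j
    have h4 : ∑ _j ∈ Finset.Icc 1 (s-1), 1 = s - 1 := by simp
    omega
  have h5 : (qpoly D h s).natDegree ≤ (Polynomial.C (((s-1).factorial : ℚ))⁻¹).natDegree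
      + (∏ j ∈ Finset.Icc 1 (s-1),
        (Polynomial.C ((D:ℚ)⁻¹) * Polynomial.X + Polynomial.C ((j:ℚ) - (h:ℚ)/(D:ℚ)))).natDegree :=
    Polynomial.natDegree_mul_le
  have h6 : (Polynomial.C (((s-1).factorial : ℚ))⁻¹).natDegree = 0 := Polynomial.natDegree_C _
  omega

lemma key_eval {D h s n : ℕ} (hD : 1 ≤ D) (hs : 1 ≤ s) (hh1 : 1 ≤ h) (hhsD : h ≤ s * D)
    (hn : 1 ≤ n) (hmod : n % D = h % D) :
    ((if h ≤ n ∧ D ∣ (n - h) then ((n - h)/D + s - 1).choose (s - 1) else 0 : ℕ) : ℚ)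
      = (qpoly D h s).eval (n:ℚ) := by
  rw [qpoly_eval]
  have hD0 : (D:ℚ) ≠ 0 := by positivity
  have hfact : ((s-1).factorial : ℚ) ≠ 0 := by exact_mod_cast (s-1).factorial_ne_zero
  by_cases hle : h ≤ n
  · have hdvd : D ∣ (n - h) := (Nat.modEq_iff_dvd' hle).1 (Nat.ModEq.symm hmod)
    rw [if_pos ⟨hle, hdvd⟩]
    set M := (n - h)/D with hM
    have hDM : D * M = n - h := Nat.mul_div_cancel' hdvd
    have hfrac : ((n:ℚ) - (h:ℚ))/(D:ℚ) = (M:ℚ) := by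
      have h1 : ((n:ℚ) - (h:ℚ)) = (D:ℚ) * (M:ℚ) := by
        have h2 : ((n - h : ℕ):ℚ) = ((D * M : ℕ):ℚ) := by
          exact_mod_cast congrArg (fun w : ℕ => (w:ℚ)) hDM.symm
        rw [Nat.cast_sub hle] at h2
        push_cast at h2
        linarith
      rw [h1]
      field_simp
    rw [Finset.prod_congr rfl (fun j _ => by rw [hfrac]), ← choose_prod (s-1) M]
    have hidx : (n - h)/D + s - 1 = M + (s - 1) := Nat.add_sub_assoc hs M
    rw [hidx, inv_mul_cancel_left₀ hfact]
  · rw [if_neg (by tauto)]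
    have hlt : n < h := lt_of_not_ge hle
    have hdvd : D ∣ (h - n) := (Nat.modEq_iff_dvd' (le_of_lt hlt)).1 hmod
    set j₀ := (h - n)/D with hj₀
    have hDj : D * j₀ = h - n := Nat.mul_div_cancel' hdvd
    have hj1 : 1 ≤ j₀ := by
      rcases Nat.eq_zero_or_pos j₀ with h0 | hpos
      · rw [h0, Nat.mul_zero] at hDj; omega
      · exact hpos
    have hj2 : j₀ ≤ s - 1 := by
      by_contra hc
      push_neg at hc
      have h1 : D * s ≤ D * j₀ := Nat.mul_le_mul_left D (by omega)
      have h2 : D * s = s * D := Nat.mul_comm D s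
      omega
    have hzero : ((n:ℚ) - (h:ℚ))/(D:ℚ) + (j₀:ℚ) = 0 := by
      have h3 : ((h:ℚ) - (n:ℚ)) = (D:ℚ) * (j₀:ℚ) := by
        have h2 : ((D * j₀ : ℕ):ℚ) = ((h - n : ℕ):ℚ) := by
          exact_mod_cast congrArg (fun w : ℕ => (w:ℚ)) hDj
        rw [Nat.cast_sub (le_of_lt hlt)] at h2
        push_cast at h2
        linarith
      field_simp
      linarith
    rw [Finset.prod_eq_zero (Finset.mem_Icc.2 ⟨hj1, hj2⟩) hzero, mul_zero]
    exact Nat.cast_zero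

end EhrhartAux

open EhrhartAux

/-- Ehrhart–Macdonald.  For a lattice polytope `P ⊆ ℝ^k` the lattice
point counting function `f_P(n) = #(nP ∩ ℤ^k)` is a rational polynomial in `n`;
for a rational polytope it is a quasipolynomial in `n`. -/
theorem stmt_17 (k : ℕ) (P : Set (Fin k → ℝ)) (f : ℕ → ℕ)
    (hf : ∀ n : ℕ, f n =
      {x : Fin k → ℝ | x ∈ (n : ℝ) • P ∧ ∀ i, ∃ z : ℤ, x i = (z : ℝ)}.ncard) :
    ((∃ V : Finset (Fin k → ℝ), (∀ x ∈ V, ∀ i, ∃ z : ℤ, x i = (z : ℝ)) ∧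
        P = convexHull ℝ ↑V) →
      ∃ p : Polynomial ℚ, ∀ n : ℕ, 1 ≤ n → (f n : ℚ) = p.eval (n : ℚ)) ∧
    ((∃ V : Finset (Fin k → ℝ), (∀ x ∈ V, ∀ i, ∃ q : ℚ, x i = (q : ℝ)) ∧
        P = convexHull ℝ ↑V) →
      ∃ (d : ℕ) (a : Fin (d + 1) → ℕ → ℚ),
        (∀ i, ∃ T : ℕ, 1 ≤ T ∧ ∀ n : ℕ, a i (n + T) = a i n) ∧
        ∀ n : ℕ, 1 ≤ n → (f n : ℚ) = ∑ i : Fin (d + 1), a i n * (n : ℚ) ^ (i : ℕ)) := by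
  classical
  constructor
  · rintro ⟨V, hVint, hP⟩
    have hv1 : ∀ (i : Fin V.card) (j : Fin k), ∃ z : ℤ,
        ((1:ℕ):ℝ) * ((V.equivFin.symm i : ↥V) : Fin k → ℝ) j = (z:ℝ) := by
      intro i j
      obtain ⟨z, hz⟩ := hVint _ (V.equivFin.symm i).2 j
      exact ⟨z, by rw [Nat.cast_one, one_mul]; exact hz⟩
    obtain ⟨N, hB, sB, hbounds, hcount⟩ := master (le_refl 1)
      (fun i : Fin V.card => ((V.equivFin.symm i : ↥V) : Fin k → ℝ)) hv1
    refine ⟨∑ a, qpoly 1 (hB a) (sB a), ?_⟩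
    intro n hn
    have h1 : f n = {x : Fin k → ℝ | (∀ j, ∃ z : ℤ, x j = (z:ℝ)) ∧
        (feas (fun i : Fin V.card => ((V.equivFin.symm i : ↥V) : Fin k → ℝ)) x (n:ℝ)).Nonempty}.ncard := by
      rw [hf n, hP, bridge V n hn]
    rw [h1, hcount n hn, Polynomial.eval_finset_sum, Nat.cast_sum]
    refine Finset.sum_congr rfl fun a _ => ?_
    refine key_eval (le_refl 1) (hbounds a).1 (hbounds a).2.2.1 ?_ hn
      (by rw [Nat.mod_one, Nat.mod_one])
    have h2 := (hbounds a).2.2.2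
    calc hB a ≤ 1 * sB a := h2
      _ = sB a * 1 := by rw [Nat.one_mul, Nat.mul_one]
  · rintro ⟨V, hVrat, hP⟩
    choose qval hqval using hVrat
    set D : ℕ := ∏ x ∈ V.attach, ∏ i, (qval x.1 x.2 i).den with hDdef
    have hD1 : 1 ≤ D :=
      Finset.prod_pos fun (x : ↥V) _ => Finset.prod_pos fun i _ => (qval x.1 x.2 i).den_pos
    have hv : ∀ (i : Fin V.card) (j : Fin k), ∃ z : ℤ,
        (D:ℝ) * ((V.equivFin.symm i : ↥V) : Fin k → ℝ) j = (z:ℝ) := by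
      intro i j
      have hy2 := (V.equivFin.symm i).2
      set r : ℚ := qval (V.equivFin.symm i).1 hy2 j with hrdef
      have hden : r.den ∣ D := by
        rw [hDdef]
        refine dvd_trans (Finset.dvd_prod_of_mem (fun i' => (qval (V.equivFin.symm i).1 hy2 i').den)
          (Finset.mem_univ j)) ?_
        exact Finset.dvd_prod_of_mem (fun x : ↥V => ∏ i', (qval x.1 x.2 i').den)
          (Finset.mem_attach V (V.equivFin.symm i))
      obtain ⟨e, he⟩ := hden
      refine ⟨(e : ℤ) * r.num, ?_⟩
      have hdenq : (r.den : ℚ) * r = (r.num : ℚ) := by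
        have h0 : (r.den : ℚ) ≠ 0 := by exact_mod_cast r.den_ne_zero
        rw [mul_comm]
        exact (eq_div_iff h0).1 (Rat.num_div_den r).symm
      have hrq : (D:ℚ) * r = (((e : ℤ) * r.num : ℤ) : ℚ) := by
        rw [he]
        push_cast
        calc (r.den : ℚ) * e * r = (e:ℚ) * ((r.den:ℚ) * r) := by ring
          _ = (e:ℚ) * (r.num:ℚ) := by rw [hdenq]
      have hvij : ((V.equivFin.symm i : ↥V) : Fin k → ℝ) j = ((r:ℚ):ℝ) := by
        rw [hrdef]
        exact hqval (V.equivFin.symm i).1 hy2 j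
      rw [hvij]
      have := congrArg (fun w : ℚ => (w : ℝ)) hrq
      push_cast at this ⊢
      linarith
    obtain ⟨N, hB, sB, hbounds, hcount⟩ := master hD1
      (fun i : Fin V.card => ((V.equivFin.symm i : ↥V) : Fin k → ℝ)) hv
    set G : ℕ → ℕ → ℚ := fun i n => ∑ a : Fin N,
      if n % D = hB a % D then (qpoly D (hB a) (sB a)).coeff i else 0 with hGdef
    refine ⟨V.card, fun i n => G i n, ?_, ?_⟩
    · intro i
      refine ⟨D, hD1, fun n => ?_⟩
      rw [hGdef]
      simp only [Nat.add_mod_right]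
    · intro n hn
      have h1 : f n = {x : Fin k → ℝ | (∀ j, ∃ z : ℤ, x j = (z:ℝ)) ∧
          (feas (fun i : Fin V.card => ((V.equivFin.symm i : ↥V) : Fin k → ℝ)) x (n:ℝ)).Nonempty}.ncard := by
        rw [hf n, hP, bridge V n hn]
      rw [h1, hcount n hn, Nat.cast_sum]
      have hterm : ∀ a : Fin N,
          ((if hB a ≤ n ∧ D ∣ (n - hB a) then
              ((n - hB a)/D + sB a - 1).choose (sB a - 1) else 0 : ℕ) : ℚ)
          = if n % D = hB a % D then (qpoly D (hB a) (sB a)).eval (n:ℚ) else 0 := by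
        intro a
        by_cases hc : n % D = hB a % D
        · rw [if_pos hc]
          refine key_eval hD1 (hbounds a).1 (hbounds a).2.2.1 ?_ hn hc
          exact le_trans (hbounds a).2.2.2 (le_of_eq (Nat.mul_comm D (sB a)))
        · rw [if_neg hc]
          have hnot : ¬(hB a ≤ n ∧ D ∣ (n - hB a)) := by
            rintro ⟨hle, hdvd⟩
            exact hc (((Nat.modEq_iff_dvd' hle).2 hdvd)).symm
          rw [if_neg hnot]
          exact Nat.cast_zero
      rw [Finset.sum_congr rfl fun a _ => hterm a]
      have hexp : ∀ a : Fin N,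
          (if n % D = hB a % D then (qpoly D (hB a) (sB a)).eval (n:ℚ) else 0)
          = ∑ i ∈ Finset.range (V.card + 1),
              (if n % D = hB a % D then (qpoly D (hB a) (sB a)).coeff i else 0) * (n:ℚ)^i := by
        intro a
        by_cases hc : n % D = hB a % D
        · rw [if_pos hc]
          have hdeg : (qpoly D (hB a) (sB a)).natDegree < V.card + 1 := by
            have h2 := qpoly_natDegree_le D (hB a) (sB a)
            have h3 := (hbounds a).2.1
            exact lt_of_le_of_lt (le_trans h2 (le_trans (Nat.sub_le _ 1) h3))
              (Nat.lt_succ_self _)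
          rw [Polynomial.eval_eq_sum_range' hdeg]
          exact Finset.sum_congr rfl fun i _ => by rw [if_pos hc]
        · rw [if_neg hc]
          symm
          apply Finset.sum_eq_zero
          intro i _
          rw [if_neg hc, zero_mul]
      rw [Finset.sum_congr rfl fun a _ => hexp a, Finset.sum_comm]
      rw [show (∑ i : Fin (V.card + 1), (fun (i : Fin (V.card+1)) (n : ℕ) => G (↑i) n) i n * (n:ℚ)^(i:ℕ))
          = ∑ i ∈ Finset.range (V.card + 1), G i n * (n:ℚ)^i from
        Fin.sum_univ_eq_sum_range (fun i => G i n * (n:ℚ)^i) (V.card + 1)]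
      refine Finset.sum_congr rfl fun i _ => ?_
      rw [hGdef]
      rw [Finset.sum_mul]
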